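/- Let f be a proper closed polyhedral convex function on ℝⁿ, let F* be a K-minimal exposed face of epi f*, and let Ψ(F*) := ⋂_{(u,f*(u)) ∈ F*} {(x,f(x)) : u ∈ ∂f(x)}. If (ū, f*(ū)) lies in the relative interior of F* and (x̄, f(x̄)) lies in the relative interior of Ψ(F*), then the set S := {w ∈ ℝⁿ : ∃ t̄ > 0 such that for all t ∈ (0, t̄), ū ∈ ∂f(x̄ + t w)} is a linear subspace of ℝⁿ with dim S = dim Ψ(F*). -/

import Mathlib

open Matrix Set
open scoped Pointwise

noncomputable section

/-- The epigraph of an extended-real-valued function on ℝⁿ. -/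
def epi (n : ℕ) (f : (Fin n → ℝ) → EReal) : Set ((Fin n → ℝ) × ℝ) :=
  {p | f p.1 ≤ (p.2 : EReal)}

/-- The Legendre–Fenchel conjugate f*(u) = sup_x (⟨x,u⟩ − f(x)). -/
def conj (n : ℕ) (f : (Fin n → ℝ) → EReal) (u : Fin n → ℝ) : EReal :=
  ⨆ x : Fin n → ℝ, (((x ⬝ᵥ u : ℝ) : EReal) - f x)

/-- The subdifferential ∂g(x₀) = {u : ∀x, g(x) ≥ g(x₀) + ⟨u, x − x₀⟩}. -/
def subdiff (n : ℕ) (g : (Fin n → ℝ) → EReal) (x₀ : Fin n → ℝ) : Set (Fin n → ℝ) :=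
  {u | ∀ x : Fin n → ℝ, g x₀ + ((u ⬝ᵥ (x - x₀) : ℝ) : EReal) ≤ g x}

/-- The ordering cone K = {0}ⁿ × [0,∞) in ℝⁿ × ℝ. -/
def Kcone (n : ℕ) : Set ((Fin n → ℝ) × ℝ) := {p | p.1 = 0 ∧ 0 ≤ p.2}

/-- y is K-minimal in A : ({y} − (K \ (−K))) ∩ A = ∅. -/
def KMinPt (n : ℕ) (A : Set ((Fin n → ℝ) × ℝ)) (y : (Fin n → ℝ) × ℝ) : Prop :=
  ({y} - (Kcone n \ (-Kcone n))) ∩ A = ∅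

/-- The hyperplane H(u,s,α) = {(x,r) : ⟨x,u⟩ + r·s = α} in ℝⁿ × ℝ. -/
def Hyp (n : ℕ) (u : Fin n → ℝ) (s α : ℝ) : Set ((Fin n → ℝ) × ℝ) :=
  {p | p.1 ⬝ᵥ u + p.2 * s = α}

/-- H(u,s,α) is a supporting hyperplane to A. -/
def IsSuppHyp (n : ℕ) (A : Set ((Fin n → ℝ) × ℝ)) (u : Fin n → ℝ) (s α : ℝ) : Prop :=
  (u, s) ≠ 0 ∧ (Hyp n u s α ∩ A).Nonempty ∧ ∀ p ∈ A, p.1 ⬝ᵥ u + p.2 * s ≤ α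

/-- E is an exposed face of A: E = H ∩ A for some supporting hyperplane H of A. -/
def IsExpFace (n : ℕ) (A E : Set ((Fin n → ℝ) × ℝ)) : Prop :=
  ∃ (u : Fin n → ℝ) (s α : ℝ), IsSuppHyp n A u s α ∧ E = Hyp n u s α ∩ A

/-- E is a K-minimal exposed face of A: an exposed face all of whose points are
K-minimal in A. -/
def IsKMinExpFace (n : ℕ) (A E : Set ((Fin n → ℝ) × ℝ)) : Prop :=
  IsExpFace n A E ∧ ∀ y ∈ E, KMinPt n A y

/-- The duality map Ψ(F*) := ⋂_{(u,f*(u)) ∈ F*} {(x,f(x)) : u ∈ ∂f(x)}. -/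
def Psi (n : ℕ) (f : (Fin n → ℝ) → EReal) (Fs : Set ((Fin n → ℝ) × ℝ)) :
    Set ((Fin n → ℝ) × ℝ) :=
  ⋂ q ∈ {q ∈ Fs | (q.2 : EReal) = conj n f q.1},
    {p | (p.2 : EReal) = f p.1 ∧ q.1 ∈ subdiff n f p.1}

/-- The inverse duality map Ψ*(F) := ⋂_{(x,f(x)) ∈ F} {(u,f*(u)) : u ∈ ∂f(x)}. -/
def PsiStar (n : ℕ) (f : (Fin n → ℝ) → EReal) (F : Set ((Fin n → ℝ) × ℝ)) :
    Set ((Fin n → ℝ) × ℝ) :=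
  ⋂ p ∈ {p ∈ F | (p.2 : EReal) = f p.1},
    {q | (q.2 : EReal) = conj n f q.1 ∧ q.1 ∈ subdiff n f p.1}
/-- A is a polyhedral subset of ℝⁿ × ℝ (finite intersection of half-spaces). -/
def IsPolyhedral (n : ℕ) (A : Set ((Fin n → ℝ) × ℝ)) : Prop :=
  ∃ (N : ℕ) (u : Fin N → Fin n → ℝ) (s β : Fin N → ℝ),
    A = {p | ∀ i, p.1 ⬝ᵥ u i + p.2 * s i ≤ β i}

/-- The dimension of a convex subset of ℝⁿ × ℝ: the dimension of its affine hull. -/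
def dimSet (n : ℕ) (F : Set ((Fin n → ℝ) × ℝ)) : ℕ :=
  Module.finrank ℝ (affineSpan ℝ F).direction

section AuxLemmas

lemma push_lemma {E : Type*} [NormedAddCommGroup E] [NormedSpace ℝ E] {s : Set E} {a b : E}
    (ha : a ∈ intrinsicInterior ℝ s) (hb : b ∈ s) : ∃ ε > (0:ℝ), a + ε • (a - b) ∈ s := by
  obtain ⟨y, hy, hya⟩ := mem_intrinsicInterior.1 ha
  obtain ⟨t, hts, hto, hyt⟩ := mem_interior.1 hy
  obtain ⟨V, hVo, hVt⟩ := isOpen_induced_iff.1 hto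
  have haV : a ∈ V := by
    have : y ∈ Subtype.val ⁻¹' V := hVt ▸ hyt
    simpa [hya] using this
  obtain ⟨r, hr, hball⟩ := Metric.isOpen_iff.1 hVo a haV
  set v := a - b with hv
  refine ⟨r / (‖v‖ + 1), by positivity, ?_⟩
  set ε := r / (‖v‖ + 1) with hε
  have hεpos : 0 < ε := by positivity
  have hnorm : ‖ε • v‖ < r := by
    rw [norm_smul, Real.norm_eq_abs, abs_of_pos hεpos]
    have h1 : ε * (‖v‖ + 1) = r := by
      rw [hε]; field_simp
    nlinarith [norm_nonneg v]
  have hmemV : a + ε • v ∈ V := by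
    apply hball
    simp [Metric.mem_ball, dist_eq_norm, hnorm]
  have haspan : a ∈ affineSpan ℝ s := by
    rw [← hya]; exact y.2
  have hbspan : b ∈ affineSpan ℝ s := subset_affineSpan ℝ s hb
  have hvdir : v ∈ (affineSpan ℝ s).direction := by
    simpa [hv] using AffineSubspace.vsub_mem_direction haspan hbspan
  have hmemspan : a + ε • v ∈ affineSpan ℝ s := by
    have := AffineSubspace.vadd_mem_of_mem_direction (Submodule.smul_mem _ ε hvdir) haspan
    simpa [vadd_eq_add, add_comm] using this
  have : (⟨a + ε • v, hmemspan⟩ : affineSpan ℝ s) ∈ Subtype.val ⁻¹' s := by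
    apply hts
    rw [← hVt]
    exact hmemV
  exact this

lemma ereal_cases (x : EReal) (hb : x ≠ ⊥) : x = ⊤ ∨ ∃ v : ℝ, x = (v : EReal) := by
  induction x with
  | bot => exact absurd rfl hb
  | coe v => exact Or.inr ⟨v, rfl⟩
  | top => exact Or.inl rfl

variable {n : ℕ} {f : (Fin n → ℝ) → EReal}

lemma FY (u : Fin n → ℝ) (x : Fin n → ℝ) : ((x ⬝ᵥ u : ℝ) : EReal) - f x ≤ conj n f u :=
  le_iSup (fun x => ((x ⬝ᵥ u : ℝ) : EReal) - f x) x

lemma FY' (hbot : ∀ x, f x ≠ ⊥) {u : Fin n → ℝ} {r : ℝ} (hr : (r : EReal) = conj n f u)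
    (x : Fin n → ℝ) : ((x ⬝ᵥ u - r : ℝ) : EReal) ≤ f x := by
  have h := FY (f := f) u x
  rw [← hr] at h
  rcases ereal_cases (f x) (hbot x) with ht | ⟨v, hv⟩
  · rw [ht]; exact le_top
  · rw [hv] at h ⊢
    rw [← EReal.coe_sub] at h
    have : x ⬝ᵥ u - v ≤ r := EReal.coe_le_coe_iff.1 h
    exact EReal.coe_le_coe_iff.2 (by linarith)

lemma subdiff_char (hdom : ∃ x, f x ≠ ⊤) (hbot : ∀ x, f x ≠ ⊥)
    {u : Fin n → ℝ} {r : ℝ} (hr : (r : EReal) = conj n f u) (x : Fin n → ℝ) :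
    u ∈ subdiff n f x ↔ f x = ((x ⬝ᵥ u - r : ℝ) : EReal) := by
  constructor
  · intro h
    obtain ⟨x₀, hx₀⟩ := hdom
    have hfx : f x ≠ ⊤ := by
      intro htop
      have := h x₀
      rw [htop, EReal.top_add_of_ne_bot (EReal.coe_ne_bot _)] at this
      exact hx₀ (top_le_iff.1 this)
    obtain ⟨v, hv⟩ := (ereal_cases (f x) (hbot x)).resolve_left hfx
    have hle : conj n f u ≤ ((x ⬝ᵥ u - v : ℝ) : EReal) := by
      apply iSup_le
      intro x'
      rcases ereal_cases (f x') (hbot x') with ht | ⟨v', hv'⟩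
      · rw [ht, EReal.sub_top]
        exact bot_le
      · have := h x'
        rw [hv, hv'] at this
        rw [hv']
        rw [← EReal.coe_add] at this
        have h' : v + u ⬝ᵥ (x' - x) ≤ v' := EReal.coe_le_coe_iff.1 this
        rw [← EReal.coe_sub]
        apply EReal.coe_le_coe_iff.2
        have hd : u ⬝ᵥ (x' - x) = x' ⬝ᵥ u - x ⬝ᵥ u := by
          rw [dotProduct_sub, dotProduct_comm u x', dotProduct_comm u x]
        rw [hd] at h'
        linarith
    rw [← hr] at hle
    have hrr : r ≤ x ⬝ᵥ u - v := EReal.coe_le_coe_iff.1 hle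
    have hge := FY' hbot hr x
    rw [hv] at hge ⊢
    have := EReal.coe_le_coe_iff.1 hge
    exact congrArg _ (by linarith)
  · intro h x'
    have hFY := FY (f := f) u x'
    rw [← hr] at hFY
    rw [h]
    rcases ereal_cases (f x') (hbot x') with ht | ⟨v', hv'⟩
    · rw [ht]; exact le_top
    · rw [hv'] at hFY ⊢
      rw [← EReal.coe_sub] at hFY
      have h1 : x' ⬝ᵥ u - v' ≤ r := EReal.coe_le_coe_iff.1 hFY
      rw [← EReal.coe_add]
      apply EReal.coe_le_coe_iff.2
      have hd : u ⬝ᵥ (x' - x) = x' ⬝ᵥ u - x ⬝ᵥ u := by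
        rw [dotProduct_sub, dotProduct_comm u x', dotProduct_comm u x]
      rw [hd]
      linarith

lemma conj_ne_bot (hdom : ∃ x, f x ≠ ⊤) (hbot : ∀ x, f x ≠ ⊥) (u : Fin n → ℝ) :
    conj n f u ≠ ⊥ := by
  obtain ⟨x₀, hx₀⟩ := hdom
  obtain ⟨v₀, hv₀⟩ := (ereal_cases (f x₀) (hbot x₀)).resolve_left hx₀
  have h : ((x₀ ⬝ᵥ u - v₀ : ℝ) : EReal) ≤ conj n f u := by
    have := le_iSup (fun x => ((x ⬝ᵥ u : ℝ) : EReal) - f x) x₀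
    rwa [hv₀, ← EReal.coe_sub] at this
  intro hc
  rw [hc, le_bot_iff] at h
  exact EReal.coe_ne_bot _ h

lemma graph_of_KMin (hdom : ∃ x, f x ≠ ⊤) (hbot : ∀ x, f x ≠ ⊥)
    {q : (Fin n → ℝ) × ℝ} (hq : q ∈ epi n (conj n f))
    (hmin : KMinPt n (epi n (conj n f)) q) : (q.2 : EReal) = conj n f q.1 := by
  have hle : conj n f q.1 ≤ (q.2 : EReal) := hq
  rcases eq_or_lt_of_le hle with h | h
  · exact h.symm
  · exfalso
    obtain ⟨c, hc1, hc2⟩ := exists_between h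
    have hcb : c ≠ ⊥ := by
      intro hcb
      rw [hcb] at hc1
      exact conj_ne_bot hdom hbot q.1 (le_bot_iff.1 hc1.le)
    have hct : c ≠ ⊤ := by
      intro hct
      rw [hct] at hc2
      exact (lt_irrefl _ (hc2.trans (EReal.coe_lt_top q.2))).elim
    obtain ⟨r', hr'⟩ := (ereal_cases c hcb).resolve_left hct
    rw [hr'] at hc1 hc2
    have hrr : r' < q.2 := EReal.coe_lt_coe_iff.1 hc2
    have : (q.1, r') ∈ ({q} - (Kcone n \ (-Kcone n))) ∩ epi n (conj n f) := by
      constructor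
      · rw [Set.mem_sub]
        refine ⟨q, rfl, (0, q.2 - r'), ⟨⟨rfl, show (0:ℝ) ≤ q.2 - r' by linarith⟩, ?_⟩, ?_⟩
        · intro hmem
          rw [Set.mem_neg] at hmem
          have h2 : (0:ℝ) ≤ (-(q, ((0:Fin n → ℝ), q.2 - r')).2.2) := hmem.2
          simp at h2
          linarith
        · show (q.1 - 0, q.2 - (q.2 - r')) = (q.1, r')
          simp
      · exact hc1.le
    rw [hmin] at this
    exact this

/-- The linear map x ↦ ⟨x, u⟩. -/
def dotLin (n : ℕ) (u : Fin n → ℝ) : (Fin n → ℝ) →ₗ[ℝ] ℝ where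
  toFun x := x ⬝ᵥ u
  map_add' x y := add_dotProduct x y u
  map_smul' c x := by simp [smul_dotProduct]

/-- The affine map x ↦ (x, ⟨x, u⟩ - r). -/
def Tmap (n : ℕ) (u : Fin n → ℝ) (r : ℝ) : (Fin n → ℝ) →ᵃ[ℝ] ((Fin n → ℝ) × ℝ) where
  toFun x := (x, x ⬝ᵥ u - r)
  linear := LinearMap.prod LinearMap.id (dotLin n u)
  map_vadd' p v := by
    apply Prod.ext
    · rfl
    · show (v + p) ⬝ᵥ u - r = v ⬝ᵥ u + (p ⬝ᵥ u - r)
      rw [add_dotProduct]; ring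

lemma Tmap_linear_injective (n : ℕ) (u : Fin n → ℝ) (r : ℝ) :
    Function.Injective (Tmap n u r).linear := by
  intro a b h
  exact congrArg Prod.fst h

end AuxLemmas

/-- for a proper closed polyhedral convex f, a K-minimal exposed
face F* of epi f* with (ū,f*(ū)) ∈ ri F* and (x̄,f(x̄)) ∈ ri Ψ(F*), the set
S = {w : ∃ t̄ > 0, ∀ t ∈ (0,t̄), ū ∈ ∂f(x̄+tw)} is a linear subspace with
dim S = dim Ψ(F*). -/
theorem stmt8 (n : ℕ) (f : (Fin n → ℝ) → EReal)
    (hdom : ∃ x, f x ≠ ⊤) (hbot : ∀ x, f x ≠ ⊥)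
    (hpoly : IsPolyhedral n (epi n f))
    (Fs : Set ((Fin n → ℝ) × ℝ))
    (hFs : IsKMinExpFace n (epi n (conj n f)) Fs)
    (ub : Fin n → ℝ) (rb : ℝ) (hrb : (rb : EReal) = conj n f ub)
    (hub : (ub, rb) ∈ intrinsicInterior ℝ Fs)
    (xb : Fin n → ℝ) (sb : ℝ) (hsb : (sb : EReal) = f xb)
    (hxb : (xb, sb) ∈ intrinsicInterior ℝ (Psi n f Fs)) :
    ∃ W : Submodule ℝ (Fin n → ℝ),
      (W : Set (Fin n → ℝ)) =
        {w : Fin n → ℝ | ∃ tb > (0 : ℝ), ∀ t ∈ Set.Ioo (0 : ℝ) tb,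
          ub ∈ subdiff n f (xb + t • w)} ∧
      Module.finrank ℝ W = dimSet n (Psi n f Fs) := by
  classical
  -- The set D = ∂f*(ū) = {x : ū ∈ ∂f(x)}
  set D : Set (Fin n → ℝ) := {x | f x = ((x ⬝ᵥ ub - rb : ℝ) : EReal)} with hDdef
  have hmemD : ∀ x, ub ∈ subdiff n f x ↔ x ∈ D := fun x => subdiff_char hdom hbot hrb x
  -- all points of Fs lie on the graph of f*
  have hFsepi : Fs ⊆ epi n (conj n f) := by
    obtain ⟨⟨u, s, α, _, hFsEq⟩, _⟩ := hFs
    rw [hFsEq]; exact Set.inter_subset_right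
  have hFsgraph : ∀ q ∈ Fs, (q.2 : EReal) = conj n f q.1 := fun q hq =>
    graph_of_KMin hdom hbot (hFsepi hq) (hFs.2 q hq)
  have hubFs : (ub, rb) ∈ Fs := intrinsicInterior_subset hub
  -- Ψ(F*) ⊆ graph of f over D
  have hψ_sub : ∀ p ∈ Psi n f Fs, p.1 ∈ D ∧ p.2 = p.1 ⬝ᵥ ub - rb := by
    intro p hp
    have hmem := Set.mem_iInter₂.1 hp (ub, rb) ⟨hubFs, hrb⟩
    obtain ⟨h1, h2⟩ := hmem
    have hD1 : p.1 ∈ D := (hmemD p.1).1 h2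
    refine ⟨hD1, ?_⟩
    have hDp : f p.1 = ((p.1 ⬝ᵥ ub - rb : ℝ) : EReal) := hD1
    exact EReal.coe_eq_coe_iff.1 (h1.trans hDp)
  -- graph of f over D ⊆ Ψ(F*)  (the face argument)
  have hψ_sup : ∀ x ∈ D, (x, x ⬝ᵥ ub - rb) ∈ Psi n f Fs := by
    intro x hx
    have hx' : f x = ((x ⬝ᵥ ub - rb : ℝ) : EReal) := hx
    apply Set.mem_iInter₂.2
    rintro q ⟨hqFs, hq2⟩
    refine ⟨hx'.symm, ?_⟩
    rw [subdiff_char hdom hbot hq2 x]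
    obtain ⟨ε, hε, hq'⟩ := push_lemma hub hqFs
    set q' : (Fin n → ℝ) × ℝ := (ub, rb) + ε • ((ub, rb) - q) with hq'def
    have hq'g : (q'.2 : EReal) = conj n f q'.1 := hFsgraph q' hq'
    have ha : x ⬝ᵥ q.1 - q.2 ≤ x ⬝ᵥ ub - rb := by
      have h := FY' hbot hq2 x
      rw [hx'] at h
      exact EReal.coe_le_coe_iff.1 h
    have ha' : x ⬝ᵥ q'.1 - q'.2 ≤ x ⬝ᵥ ub - rb := by
      have h := FY' hbot hq'g x
      rw [hx'] at h
      exact EReal.coe_le_coe_iff.1 h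
    have hc1 : q'.1 = ub + ε • (ub - q.1) := rfl
    have hc2 : q'.2 = rb + ε * (rb - q.2) := rfl
    have hdot : x ⬝ᵥ q'.1 = x ⬝ᵥ ub + ε * (x ⬝ᵥ ub - x ⬝ᵥ q.1) := by
      rw [hc1, dotProduct_add, dotProduct_smul, dotProduct_sub, smul_eq_mul]
    have heq : x ⬝ᵥ q.1 - q.2 = x ⬝ᵥ ub - rb := by
      rw [hdot, hc2] at ha'
      nlinarith
    rw [hx', heq]
  -- x̄ lies in D
  have hxbΨ : (xb, sb) ∈ Psi n f Fs := intrinsicInterior_subset hxb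
  have hxbD : xb ∈ D := (hψ_sub _ hxbΨ).1
  -- convexity of D (via polyhedrality of epi f)
  have hDepi : ∀ x : Fin n → ℝ, x ∈ D ↔ (x, x ⬝ᵥ ub - rb) ∈ epi n f := by
    intro x
    constructor
    · intro hx
      have hx' : f x = ((x ⬝ᵥ ub - rb : ℝ) : EReal) := hx
      exact le_of_eq hx'
    · intro hx
      have h1 : f x ≤ ((x ⬝ᵥ ub - rb : ℝ) : EReal) := hx
      exact le_antisymm h1 (FY' hbot hrb x)
  obtain ⟨N, uu, ss, ββ, hepi⟩ := hpoly
  have hDseg : ∀ y ∈ D, ∀ z ∈ D, ∀ a b : ℝ, 0 ≤ a → 0 ≤ b → a + b = 1 →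
      a • y + b • z ∈ D := by
    intro y hy z hz a b hA hB hab
    have hb1 : b = 1 - a := by linarith
    subst hb1
    rw [hDepi] at hy hz ⊢
    rw [hepi] at hy hz ⊢
    intro i
    have h1 := hy i
    have h2 := hz i
    simp only at h1 h2 ⊢
    rw [add_dotProduct, add_dotProduct, smul_dotProduct, smul_dotProduct,
      smul_dotProduct, smul_dotProduct, smul_eq_mul, smul_eq_mul, smul_eq_mul, smul_eq_mul]
    nlinarith [mul_le_mul_of_nonneg_left h1 hA, mul_le_mul_of_nonneg_left h2 hB]
  -- shrinking along a segment from x̄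
  have hshrink : ∀ (w : Fin n → ℝ) (ε δ : ℝ), 0 < δ → δ ≤ ε → xb + ε • w ∈ D →
      xb + δ • w ∈ D := by
    intro w ε δ hδ hδε hεD
    have hεpos : 0 < ε := lt_of_lt_of_le hδ hδε
    have key : xb + δ • w = (1 - δ / ε) • xb + (δ / ε) • (xb + ε • w) := by
      have h1 : (δ / ε) • (ε • w) = δ • w := by
        rw [smul_smul, div_mul_cancel₀]
        exact ne_of_gt hεpos
      rw [smul_add, h1, ← add_assoc, ← add_smul]
      norm_num
    rw [key]
    apply hDseg _ hxbD _ hεD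
    · have : δ / ε ≤ 1 := by
        rw [div_le_one hεpos]; exact hδε
      linarith
    · positivity
    · ring
  -- pushing within D from x̄
  have hpushD : ∀ y ∈ D, ∃ ε > (0:ℝ), xb + ε • (xb - y) ∈ D := by
    intro y hy
    obtain ⟨ε, hε, hmem⟩ := push_lemma hxb (hψ_sup y hy)
    refine ⟨ε, hε, ?_⟩
    have h1 := (hψ_sub _ hmem).1
    exact h1
  -- the candidate carrier
  set Sc : Set (Fin n → ℝ) := {w | ∃ ε > (0:ℝ), xb + ε • w ∈ D} with hScdef
  have hSneg : ∀ w ∈ Sc, -w ∈ Sc := by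
    rintro w ⟨ε, hε, h⟩
    obtain ⟨δ, hδ, h2⟩ := hpushD _ h
    refine ⟨δ * ε, by positivity, ?_⟩
    have key : xb + δ • (xb - (xb + ε • w)) = xb + (δ * ε) • (-w) := by
      rw [smul_neg, ← smul_smul]
      congr 1
      rw [← smul_neg]
      congr 1
      abel
    rw [← key]
    exact h2
  have hSadd : ∀ w₁ ∈ Sc, ∀ w₂ ∈ Sc, w₁ + w₂ ∈ Sc := by
    rintro w₁ ⟨ε, hε, h1⟩ w₂ ⟨δ, hδ, h2⟩
    set μ := min ε δ with hμ
    have hμpos : 0 < μ := lt_min hε hδ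
    have h1' : xb + μ • w₁ ∈ D := hshrink _ _ _ hμpos (min_le_left _ _) h1
    have h2' : xb + μ • w₂ ∈ D := hshrink _ _ _ hμpos (min_le_right _ _) h2
    refine ⟨μ / 2, by positivity, ?_⟩
    have key : xb + (μ / 2) • (w₁ + w₂) =
        (1/2 : ℝ) • (xb + μ • w₁) + (1/2 : ℝ) • (xb + μ • w₂) := by
      module
    rw [key]
    exact hDseg _ h1' _ h2' (1/2) (1/2) (by norm_num) (by norm_num) (by norm_num)
  have hSsmul : ∀ (c : ℝ), ∀ w ∈ Sc, c • w ∈ Sc := by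
    intro c w hw
    rcases lt_trichotomy c 0 with hc | hc | hc
    · have hnw := hSneg w hw
      obtain ⟨ε, hε, h⟩ := hnw
      have hc0 : c ≠ 0 := ne_of_lt hc
      refine ⟨ε / (-c), div_pos hε (neg_pos.2 hc), ?_⟩
      have heq : (ε / (-c)) • (c • w) = ε • (-w) := by
        rw [smul_smul, show ε / -c * c = -ε by rw [div_neg, neg_mul, div_mul_cancel₀ ε hc0], neg_smul, ← smul_neg]
      rw [heq]
      exact h
    · subst hc
      refine ⟨1, one_pos, ?_⟩
      simpa using hxbD
    · obtain ⟨ε, hε, h⟩ := hw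
      refine ⟨ε / c, by positivity, ?_⟩
      have : (ε / c) • (c • w) = ε • w := by
        rw [smul_smul, div_mul_cancel₀]
        exact ne_of_gt hc
      rw [this]
      exact h
  set S' : Submodule ℝ (Fin n → ℝ) :=
    { carrier := Sc
      add_mem' := fun ha hb => hSadd _ ha _ hb
      zero_mem' := ⟨1, one_pos, by simpa using hxbD⟩
      smul_mem' := fun c w hw => hSsmul c w hw } with hS'def
  set W : Submodule ℝ (Fin n → ℝ) := (affineSpan ℝ D).direction with hWdef
  -- W = S'
  have hWS : W = S' := by
    apply le_antisymm
    · rw [hWdef, direction_affineSpan, vectorSpan_def]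
      apply Submodule.span_le.2
      rintro v hv
      obtain ⟨y, hy, z, hz, rfl⟩ := hv
      have hyS : y - xb ∈ S' := by
        refine ⟨1, one_pos, ?_⟩
        simpa using hy
      have hzS : z - xb ∈ S' := by
        refine ⟨1, one_pos, ?_⟩
        simpa using hz
      show y - z ∈ (S' : Set (Fin n → ℝ))
      have heq : y - z = (y - xb) - (z - xb) := by abel
      rw [heq]
      exact S'.sub_mem hyS hzS
    · rintro w ⟨ε, hε, h⟩
      have h1 : (xb + ε • w) -ᵥ xb ∈ (affineSpan ℝ D).direction :=
        AffineSubspace.vsub_mem_direction (subset_affineSpan ℝ D h) (subset_affineSpan ℝ D hxbD)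
      have h2 : ε • w ∈ W := by
        rw [hWdef]
        simpa [vsub_eq_sub] using h1
      have h3 := Submodule.smul_mem W ε⁻¹ h2
      rwa [smul_smul, inv_mul_cancel₀ (ne_of_gt hε), one_smul] at h3
  refine ⟨W, ?_, ?_⟩
  · -- carrier equality
    rw [hWS]
    show Sc = _
    ext w
    constructor
    · rintro ⟨ε, hε, h⟩
      refine ⟨ε, hε, fun t ht => ?_⟩
      exact (hmemD _).2 (hshrink w ε t ht.1 ht.2.le h)
    · rintro ⟨tb, htb, h⟩
      refine ⟨tb / 2, by positivity, ?_⟩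
      exact (hmemD _).1 (h (tb / 2) ⟨by positivity, by linarith⟩)
  · -- dimension equality
    have hTD : Psi n f Fs = (Tmap n ub rb) '' D := by
      ext p
      constructor
      · intro hp
        obtain ⟨h1, h2⟩ := hψ_sub p hp
        refine ⟨p.1, h1, ?_⟩
        show (p.1, p.1 ⬝ᵥ ub - rb) = p
        rw [← h2]
      · rintro ⟨x, hx, rfl⟩
        exact hψ_sup x hx
    rw [dimSet, hTD, ← AffineSubspace.map_span, AffineSubspace.map_direction]
    exact (Submodule.equivMapOfInjective _ (Tmap_linear_injective n ub rb) W).finrank_eq
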